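/- Let f : ℝ → ℝ be continuous with |f(t)| ≤ C(|t| + |t|^{p^*−1}) for all t, for some C > 0, and let F(t) := ∫_0^t f(s) ds. Let u and (u_n) be measurable functions from ℝ^N to ℝ such that u_n → u almost everywhere on ℝ^N, sup_n ∫_{ℝ^N} (u_n² + |u_n|^{p^*}) dx < +∞, sup_n ∫_{ℝ^N} ((u_n−u)² + |u_n−u|^{p^*}) dx < +∞, and ∫_{ℝ^N} (u² + |u|^{p^*}) dx < +∞. Then ∫_{ℝ^N} |F(u_n) − F(u_n−u) − F(u)| dx → 0 as n → ∞. (Lemma 2.6, a Brezis–Lieb-type splitting, stated with the L²∩L^{p^*}-bounds that the Sobolev bounds yield.) -/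

import Mathlib

open Filter Set MeasureTheory

lemma two_rpow_split (a b s : ℝ) (ha : 0 ≤ a) (hb : 0 ≤ b) (hs : 0 ≤ s) :
    (a + b) ^ s ≤ 2 ^ s * (a ^ s + b ^ s) := by
  have hmax : a + b ≤ 2 * max a b := by
    rcases le_total a b with h | h
    · rw [max_eq_right h]; linarith
    · rw [max_eq_left h]; linarith
  have h0 : 0 ≤ max a b := le_trans ha (le_max_left a b)
  calc (a + b) ^ s ≤ (2 * max a b) ^ s :=
        Real.rpow_le_rpow (by linarith) hmax hs
    _ = 2 ^ s * (max a b) ^ s := Real.mul_rpow (by norm_num) h0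
    _ ≤ 2 ^ s * (a ^ s + b ^ s) := by
        have h2s : 0 ≤ (2:ℝ) ^ s := Real.rpow_nonneg (by norm_num) s
        have : (max a b) ^ s ≤ a ^ s + b ^ s := by
          rcases max_cases a b with ⟨h1, _⟩ | ⟨h1, _⟩ <;> rw [h1]
          · nlinarith [Real.rpow_nonneg hb s]
          · nlinarith [Real.rpow_nonneg ha s]
        nlinarith

lemma young_like (r ε x y : ℝ) (hr : 0 < r) (hε : 0 < ε) (hx : 0 ≤ x) (hy : 0 ≤ y) :
    x * y ^ r ≤ ε * y ^ (r + 1) + ε ^ (-r) * x ^ (r + 1) := by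
  have hεr : 0 ≤ ε ^ (-r) := Real.rpow_nonneg hε.le _
  rcases eq_or_lt_of_le hy with h0 | hy'
  · rw [← h0, Real.zero_rpow (ne_of_gt hr), Real.zero_rpow (by positivity)]
    simp
    positivity
  rcases le_or_gt x (ε * y) with h | h
  · have h1 : x * y ^ r ≤ (ε * y) * y ^ r :=
      mul_le_mul_of_nonneg_right h (Real.rpow_nonneg hy _)
    have h2 : (ε * y) * y ^ r = ε * y ^ (r + 1) := by
      rw [Real.rpow_add_one (ne_of_gt hy')]; ring
    nlinarith [Real.rpow_nonneg hx (r + 1)]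
  · have hx' : 0 < x := lt_of_le_of_lt (by positivity) h
    have hy2 : y ≤ x / ε := by rw [le_div_iff₀ hε]; nlinarith
    have h1 : y ^ r ≤ (x / ε) ^ r := Real.rpow_le_rpow hy hy2 hr.le
    have h2 : (x / ε) ^ r = x ^ r * ε ^ (-r) := by
      rw [Real.div_rpow hx hε.le, Real.rpow_neg hε.le, div_eq_mul_inv]
    have h3 : x * (x ^ r * ε ^ (-r)) = ε ^ (-r) * x ^ (r + 1) := by
      rw [Real.rpow_add_one (ne_of_gt hx')]; ring
    have h4 : x * y ^ r ≤ x * (x ^ r * ε ^ (-r)) := by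
      apply mul_le_mul_of_nonneg_left _ hx'.le
      rw [← h2]; exact h1
    nlinarith [Real.rpow_nonneg hy (r+1), mul_nonneg hε.le (Real.rpow_nonneg hy (r+1))]

lemma abs_rpow_cont (q : ℝ) (hq : 0 ≤ q) : Continuous fun t : ℝ => |t| ^ q := by
  rw [continuous_iff_continuousAt]
  intro t
  exact (Real.continuousAt_rpow_const |t| q (Or.inr hq)).comp continuous_abs.continuousAt

lemma key_bound (q C : ℝ) (hq : 2 < q) (hC : 0 < C) (f : ℝ → ℝ) (hf : Continuous f)
    (hgrow : ∀ t, |f t| ≤ C * (|t| + |t| ^ (q - 1))) (ε : ℝ) (hε : 0 < ε) :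
    ∃ K, 0 < K ∧ ∀ v w : ℝ, |∫ s in v..(v + w), f s| ≤ ε * (v ^ 2 + |v| ^ q) + K * (w ^ 2 + |w| ^ q) := by
  set ε1 : ℝ := ε / (2 * C * 2 ^ q) with hε1def
  have h2q : (0:ℝ) < 2 ^ q := Real.rpow_pos_of_pos (by norm_num) q
  have hε1 : 0 < ε1 := by positivity
  refine ⟨C * (2 * ε1 + ε1⁻¹ + ε1 * 2 ^ q + ε1 ^ (-(q - 1))) + 1, by positivity, ?_⟩
  intro v w
  set R : ℝ := |v| + |w| with hRdef
  have hR0 : 0 ≤ R := by positivity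
  -- bound the integrand on the interval
  have hbound : ∀ s ∈ Set.uIoc v (v + w), ‖f s‖ ≤ C * (R + R ^ (q - 1)) := by
    intro s hs
    have hsmem : s ∈ Set.Ioc (min v (v + w)) (max v (v + w)) := hs
    have habs : |s| ≤ R := by
      have h1 : s ≤ max v (v + w) := hsmem.2
      have h2 : min v (v + w) ≤ s := le_of_lt hsmem.1
      have h3 : max v (v + w) ≤ R := by
        apply max_le
        · have := abs_nonneg w; have := le_abs_self v; linarith
        · have := le_abs_self (v + w); have := abs_add_le v w; linarith
      have h4 : -R ≤ min v (v + w) := by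
        apply le_min
        · have := abs_nonneg w; have := neg_abs_le v; linarith
        · have := neg_abs_le (v + w); have h5 := abs_add_le v w; linarith
      rw [abs_le]; constructor <;> linarith
    calc ‖f s‖ = |f s| := rfl
      _ ≤ C * (|s| + |s| ^ (q - 1)) := hgrow s
      _ ≤ C * (R + R ^ (q - 1)) := by
          have : |s| ^ (q - 1) ≤ R ^ (q - 1) :=
            Real.rpow_le_rpow (abs_nonneg s) habs (by linarith)
          nlinarith
  have hint := intervalIntegral.norm_integral_le_of_norm_le_const hbound
  have hw : |v + w - v| = |w| := by rw [add_sub_cancel_left]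
  rw [hw] at hint
  have hI : |∫ s in v..(v + w), f s| ≤ C * (|w| * R + |w| * R ^ (q - 1)) := by
    calc |∫ s in v..(v + w), f s| ≤ C * (R + R ^ (q - 1)) * |w| := hint
      _ = C * (|w| * R + |w| * R ^ (q - 1)) := by ring
  -- term 1 : |w| * R
  have ht1 : |w| * R ≤ ε1 * R ^ 2 + ε1⁻¹ * w ^ 2 := by
    have h := young_like 1 ε1 |w| R one_pos hε1 (abs_nonneg w) hR0
    rw [Real.rpow_one] at h
    have h11 : (1:ℝ) + 1 = 2 := by norm_num
    rw [h11] at h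
    rw [Real.rpow_two, Real.rpow_two, Real.rpow_neg_one] at h
    calc |w| * R ≤ ε1 * R ^ 2 + ε1⁻¹ * |w| ^ 2 := h
      _ = ε1 * R ^ 2 + ε1⁻¹ * w ^ 2 := by rw [sq_abs]
  have hR2 : R ^ 2 ≤ 2 * v ^ 2 + 2 * w ^ 2 := by
    rw [hRdef]; nlinarith [sq_abs v, sq_abs w, sq_nonneg (|v| - |w|), abs_nonneg v, abs_nonneg w]
  -- term 2 : |w| * R ^ (q-1)
  have ht2 : |w| * R ^ (q - 1) ≤ ε1 * R ^ q + ε1 ^ (-(q - 1)) * |w| ^ q := by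
    have h := young_like (q - 1) ε1 |w| R (by linarith) hε1 (abs_nonneg w) hR0
    have hq1 : q - 1 + 1 = q := by ring
    rw [hq1] at h
    exact h
  have hRq : R ^ q ≤ 2 ^ q * (|v| ^ q + |w| ^ q) :=
    two_rpow_split |v| |w| q (abs_nonneg v) (abs_nonneg w) (by linarith)
  -- combine
  have hvq : 0 ≤ |v| ^ q := Real.rpow_nonneg (abs_nonneg v) q
  have hwq : 0 ≤ |w| ^ q := Real.rpow_nonneg (abs_nonneg w) q
  have h1q : (1:ℝ) ≤ 2 ^ q := by
    have := Real.rpow_le_rpow_of_exponent_le (by norm_num : (1:ℝ) ≤ 2) (by linarith : (0:ℝ) ≤ q)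
    simpa using this
  have hcoef1 : C * ε1 * 2 ≤ ε := by
    have he : C * ε1 * 2 = ε / 2 ^ q := by
      rw [hε1def]; field_simp
    rw [he]
    exact div_le_self hε.le h1q
  have hcoef2 : C * ε1 * 2 ^ q ≤ ε := by
    have he : C * ε1 * 2 ^ q = ε / 2 := by
      rw [hε1def]; field_simp
    rw [he]; linarith
  have hεn : 0 ≤ ε1 ^ (-(q - 1)) := Real.rpow_nonneg hε1.le _
  have hεi : 0 ≤ ε1⁻¹ := by positivity
  calc |∫ s in v..(v + w), f s| ≤ C * (|w| * R + |w| * R ^ (q - 1)) := hI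
    _ ≤ C * ((ε1 * (2 * v ^ 2 + 2 * w ^ 2) + ε1⁻¹ * w ^ 2)
          + (ε1 * (2 ^ q * (|v| ^ q + |w| ^ q)) + ε1 ^ (-(q - 1)) * |w| ^ q)) := by
        have e0 : ε1 * R ^ 2 ≤ ε1 * (2 * v ^ 2 + 2 * w ^ 2) := mul_le_mul_of_nonneg_left hR2 hε1.le
        have e0' : ε1 * R ^ q ≤ ε1 * (2 ^ q * (|v| ^ q + |w| ^ q)) := mul_le_mul_of_nonneg_left hRq hε1.le
        have e1 : |w| * R ≤ ε1 * (2 * v ^ 2 + 2 * w ^ 2) + ε1⁻¹ * w ^ 2 :=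
          le_trans ht1 (add_le_add e0 le_rfl)
        have e2 : |w| * R ^ (q - 1) ≤ ε1 * (2 ^ q * (|v| ^ q + |w| ^ q)) + ε1 ^ (-(q - 1)) * |w| ^ q :=
          le_trans ht2 (add_le_add e0' le_rfl)
        have := add_le_add e1 e2
        exact mul_le_mul_of_nonneg_left this hC.le
    _ ≤ ε * (v ^ 2 + |v| ^ q) + (C * (2 * ε1 + ε1⁻¹ + ε1 * 2 ^ q + ε1 ^ (-(q - 1))) + 1) * (w ^ 2 + |w| ^ q) := by
        have i1 : C * ε1 * 2 * v ^ 2 ≤ ε * v ^ 2 := mul_le_mul_of_nonneg_right hcoef1 (sq_nonneg v)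
        have i2 : C * ε1 * 2 ^ q * |v| ^ q ≤ ε * |v| ^ q := mul_le_mul_of_nonneg_right hcoef2 hvq
        have p1 : 0 ≤ C * (ε1 * 2 ^ q) * w ^ 2 := by positivity
        have p2 : 0 ≤ C * ε1 ^ (-(q - 1)) * w ^ 2 := by positivity
        have p3 : 0 ≤ C * (2 * ε1) * |w| ^ q := mul_nonneg (by positivity) hwq
        have p4 : 0 ≤ C * ε1⁻¹ * |w| ^ q := mul_nonneg (by positivity) hwq
        nlinarith [sq_nonneg w, hwq]

theorem stmt_15 (N : ℕ) (hN : 3 ≤ N) (p : ℝ) (hp2 : 2 ≤ p) (hpN : p < (N : ℝ))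
    (C : ℝ) (hCpos : 0 < C)
    (f F : ℝ → ℝ) (hf0 : Continuous f)
    (hgrow : ∀ t : ℝ, |f t| ≤ C * (|t| + |t| ^ (((N : ℝ) * p / ((N : ℝ) - p)) - 1)))
    (hF : ∀ t : ℝ, F t = ∫ s in (0:ℝ)..t, f s)
    (u : (Fin N → ℝ) → ℝ) (hu : Measurable u)
    (un : ℕ → (Fin N → ℝ) → ℝ) (hun : ∀ n : ℕ, Measurable (un n))
    (hae : ∀ᵐ x : Fin N → ℝ, Tendsto (fun n : ℕ => un n x) atTop (nhds (u x)))
    (hint1 : ∀ n : ℕ, Integrable (fun x : Fin N → ℝ => (un n x) ^ 2 + |un n x| ^ ((N : ℝ) * p / ((N : ℝ) - p))))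
    (hint2 : ∀ n : ℕ, Integrable (fun x : Fin N → ℝ => (un n x - u x) ^ 2 + |un n x - u x| ^ ((N : ℝ) * p / ((N : ℝ) - p))))
    (hint3 : Integrable (fun x : Fin N → ℝ => (u x) ^ 2 + |u x| ^ ((N : ℝ) * p / ((N : ℝ) - p))))
    (M : ℝ)
    (hb1 : ∀ n : ℕ, (∫ x : Fin N → ℝ, ((un n x) ^ 2 + |un n x| ^ ((N : ℝ) * p / ((N : ℝ) - p)))) ≤ M)
    (hb2 : ∀ n : ℕ, (∫ x : Fin N → ℝ, ((un n x - u x) ^ 2 + |un n x - u x| ^ ((N : ℝ) * p / ((N : ℝ) - p)))) ≤ M) :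
    Tendsto (fun n : ℕ => ∫ x : Fin N → ℝ, |F (un n x) - F (un n x - u x) - F (u x)|)
      atTop (nhds 0) := by
  set q : ℝ := (N : ℝ) * p / ((N : ℝ) - p) with hqdef
  have hNp : 0 < (N : ℝ) - p := by linarith
  have hq2 : 2 < q := by
    have h1 : p < q := by
      rw [hqdef, lt_div_iff₀ hNp]; nlinarith
    linarith
  have hq0 : 0 < q := by linarith
  -- continuity of F
  have hFc : Continuous F := by
    have hFe : F = fun t => ∫ s in (0:ℝ)..t, f s := funext hF
    rw [hFe]
    exact intervalIntegral.continuous_primitive (fun a b => hf0.intervalIntegrable a b) 0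
  have hF0 : F 0 = 0 := by rw [hF]; simp
  have hsplit : ∀ v w : ℝ, F (v + w) - F v = ∫ s in v..(v + w), f s := by
    intro v w
    rw [hF, hF,
      ← intervalIntegral.integral_add_adjacent_intervals (hf0.intervalIntegrable 0 v)
        (hf0.intervalIntegrable v (v + w))]
    ring
  -- notation
  set g : ℕ → (Fin N → ℝ) → ℝ :=
    fun n x => |F (un n x) - F (un n x - u x) - F (u x)| with hgdef
  set h : ℕ → (Fin N → ℝ) → ℝ :=
    fun n x => (un n x - u x) ^ 2 + |un n x - u x| ^ q with hhdef
  set φ : (Fin N → ℝ) → ℝ := fun x => (u x) ^ 2 + |u x| ^ q with hφdef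
  have habsqc : Continuous fun t : ℝ => |t| ^ q := abs_rpow_cont q hq0.le
  have hcont2 : Continuous fun t : ℝ => t ^ 2 + |t| ^ q := (continuous_pow 2).add habsqc
  have hgm : ∀ n, Measurable (g n) := fun n =>
    (((hFc.measurable.comp (hun n)).sub
      (hFc.measurable.comp ((hun n).sub hu))).sub (hFc.measurable.comp hu)).abs
  have hhm : ∀ n, Measurable (h n) := fun n => hcont2.measurable.comp ((hun n).sub hu)
  have hh_nonneg : ∀ n x, 0 ≤ h n x := by
    intro n x
    have := Real.rpow_nonneg (abs_nonneg (un n x - u x)) q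
    have := sq_nonneg (un n x - u x)
    simp only [hhdef]; positivity
  have hφ_nonneg : ∀ x, 0 ≤ φ x := by
    intro x
    have := Real.rpow_nonneg (abs_nonneg (u x)) q
    simp only [hφdef]; positivity
  have hM0 : 0 ≤ M := by
    have h0 : 0 ≤ ∫ x, h 0 x := integral_nonneg (hh_nonneg 0)
    have := hb2 0
    exact le_trans h0 this
  -- main estimate
  rw [Metric.tendsto_atTop]
  intro ε0 hε0
  set ε : ℝ := ε0 / (2 * (M + 1)) with hεdef
  have hε : 0 < ε := by positivity
  obtain ⟨K, hK, hKb⟩ := key_bound q C hq2 hCpos f hf0 hgrow ε hε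
  -- pointwise bound on g
  have hgb : ∀ n x, g n x ≤ ε * h n x + 2 * K * φ x := by
    intro n x
    have hv : un n x - u x + u x = un n x := by ring
    have b1 : |F (un n x) - F (un n x - u x)| ≤ ε * h n x + K * φ x := by
      have e := hsplit (un n x - u x) (u x)
      rw [hv] at e
      have hb := hKb (un n x - u x) (u x)
      rw [hv] at hb
      rw [e]
      exact hb
    have b2 : |F (u x)| ≤ K * φ x := by
      have e := hsplit 0 (u x)
      rw [hF0, sub_zero, zero_add] at e
      have hb := hKb 0 (u x)
      rw [zero_add] at hb
      rw [e]
      have h0 : ε * ((0:ℝ) ^ 2 + |(0:ℝ)| ^ q) = 0 := by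
        rw [abs_zero, Real.zero_rpow (ne_of_gt hq0)]; ring
      rw [h0, zero_add] at hb
      exact hb
    have := abs_sub (F (un n x) - F (un n x - u x)) (F (u x))
    have habs : g n x ≤ |F (un n x) - F (un n x - u x)| + |F (u x)| := by
      simp only [hgdef]
      exact abs_sub _ _
    linarith
  -- ψ construction
  set ψ : ℕ → (Fin N → ℝ) → ℝ := fun n x => max (g n x - ε * h n x) 0 with hψdef
  have hψm : ∀ n, Measurable (ψ n) := fun n =>
    ((hgm n).sub ((hhm n).const_mul ε)).max measurable_const
  have hψ_nonneg : ∀ n x, 0 ≤ ψ n x := fun n x => le_max_right _ _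
  have hψ_le : ∀ n x, ψ n x ≤ 2 * K * φ x := by
    intro n x
    apply max_le
    · have := hgb n x; linarith
    · have := hφ_nonneg x; positivity
  have hbig : Integrable (fun x => 2 * K * φ x) := hint3.const_mul (2 * K)
  have hψi : ∀ n, Integrable (ψ n) := by
    intro n
    apply hbig.mono' (hψm n).aestronglyMeasurable
    filter_upwards with x
    rw [Real.norm_eq_abs, abs_of_nonneg (hψ_nonneg n x)]
    exact hψ_le n x
  have hgi : ∀ n, Integrable (g n) := by
    intro n
    apply (((hint2 n).const_mul ε).add hbig).mono' (hgm n).aestronglyMeasurable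
    filter_upwards with x
    rw [Real.norm_eq_abs, abs_of_nonneg (abs_nonneg _)]
    exact hgb n x
  -- a.e. convergence of ψ to 0
  have haeψ : ∀ᵐ x : Fin N → ℝ, Tendsto (fun n => ψ n x) atTop (nhds 0) := by
    filter_upwards [hae] with x hx
    have hd : Tendsto (fun n => un n x - u x) atTop (nhds 0) := by
      have := hx.sub_const (u x)
      simpa using this
    have hFun : Tendsto (fun n => F (un n x)) atTop (nhds (F (u x))) :=
      (hFc.tendsto (u x)).comp hx
    have hFd : Tendsto (fun n => F (un n x - u x)) atTop (nhds 0) := by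
      have := (hFc.tendsto 0).comp hd
      rwa [hF0] at this
    have hg0 : Tendsto (fun n => g n x) atTop (nhds 0) := by
      have := ((hFun.sub hFd).sub (tendsto_const_nhds (x := F (u x)))).abs
      simpa using this
    have hh0 : Tendsto (fun n => h n x) atTop (nhds 0) := by
      have := (hcont2.tendsto 0).comp hd
      have e0 : (0:ℝ) ^ 2 + |(0:ℝ)| ^ q = 0 := by simp [Real.zero_rpow (ne_of_gt hq0)]
      rw [e0] at this
      exact this
    have := (hg0.sub (hh0.const_mul ε)).max (tendsto_const_nhds (x := (0:ℝ)))
    simpa using this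
  -- DCT
  have hdct : Tendsto (fun n => ∫ x, ψ n x) atTop (nhds 0) := by
    have := tendsto_integral_of_dominated_convergence (μ := volume)
      (F := ψ) (f := fun _ => 0) (fun x => 2 * K * φ x)
      (fun n => (hψm n).aestronglyMeasurable) hbig
      (fun n => by
        filter_upwards with x
        rw [Real.norm_eq_abs, abs_of_nonneg (hψ_nonneg n x)]
        exact hψ_le n x)
      haeψ
    simpa using this
  rw [Metric.tendsto_atTop] at hdct
  obtain ⟨N0, hN0⟩ := hdct (ε0 / 2) (by positivity)
  refine ⟨N0, fun n hn => ?_⟩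
  have hψn : ∫ x, ψ n x < ε0 / 2 := by
    have := hN0 n hn
    rw [Real.dist_eq, sub_zero] at this
    calc ∫ x, ψ n x ≤ |∫ x, ψ n x| := le_abs_self _
      _ < ε0 / 2 := this
  have hmono : ∫ x, g n x ≤ (∫ x, ψ n x) + ε * ∫ x, h n x := by
    have hle : ∀ x, g n x ≤ ψ n x + ε * h n x := by
      intro x
      have := le_max_left (g n x - ε * h n x) 0
      linarith
    calc ∫ x, g n x ≤ ∫ x, (ψ n x + ε * h n x) :=
          integral_mono (hgi n) ((hψi n).add ((hint2 n).const_mul ε)) hle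
      _ = (∫ x, ψ n x) + ε * ∫ x, h n x := by
          rw [integral_add (hψi n) ((hint2 n).const_mul ε), MeasureTheory.integral_const_mul]
  have hhM : ε * (∫ x, h n x) ≤ ε * M := mul_le_mul_of_nonneg_left (hb2 n) hε.le
  have hεM : ε * M < ε0 / 2 := by
    have he : ε * (M + 1) = ε0 / 2 := by
      rw [hεdef]; field_simp
    nlinarith
  have hgn : 0 ≤ ∫ x, g n x := integral_nonneg fun x => abs_nonneg _
  rw [Real.dist_eq, sub_zero, abs_of_nonneg hgn]
  calc ∫ x, g n x ≤ (∫ x, ψ n x) + ε * ∫ x, h n x := hmono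
    _ < ε0 / 2 + ε0 / 2 := by linarith
    _ = ε0 := by ring
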